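/- Let d : ℝ × ℝ → [0,∞) be C² on ℝ² \ Δ with: (H1) d(x,y) > 0 for (x,y) ∉ Δ and d(x,x) = 0; (H2) d(x,y) = d(y,x); (H3) ∂₁∂₂ d(x,y) ≥ 0 for (x,y) ∉ Δ; (H4A) for every fixed a, the function t ↦ d(t,a) is nonincreasing on (-∞, a) and nondecreasing on (a, ∞). Then d is a distance on ℝ (i.e., it satisfies the triangle inequality). -/

import Mathlib

open Set Filter

def IsDistance (d : ℝ → ℝ → ℝ) : Prop :=
  (∀ x y, 0 ≤ d x y) ∧ (∀ x y, d x y = 0 ↔ x = y) ∧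
  (∀ x y, d x y = d y x) ∧ (∀ x y z, d x z ≤ d x y + d y z)

theorem distance_of_H4A (d : ℝ → ℝ → ℝ)
    (hnonneg : ∀ x y, 0 ≤ d x y)
    (hC2 : ContDiffOn ℝ 2 (fun p : ℝ × ℝ => d p.1 p.2) {p : ℝ × ℝ | p.1 ≠ p.2})
    (h1 : ∀ x y : ℝ, x ≠ y → 0 < d x y) (h1' : ∀ x : ℝ, d x x = 0)
    (h2 : ∀ x y, d x y = d y x)
    (h3 : ∀ a b : ℝ, a ≠ b → 0 ≤ deriv (fun s => deriv (fun t => d s t) b) a)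
    (h4A : ∀ a : ℝ, AntitoneOn (fun t => d t a) (Set.Iio a) ∧
      MonotoneOn (fun t => d t a) (Set.Ioi a)) :
    IsDistance d := by
  classical
  set f : ℝ × ℝ → ℝ := fun p => d p.1 p.2 with hfdef
  set U : Set (ℝ × ℝ) := {p : ℝ × ℝ | p.1 ≠ p.2} with hUdef
  have hU : IsOpen U := isOpen_ne_fun continuous_fst continuous_snd
  set F : ℝ × ℝ → ℝ := fun p => fderiv ℝ f p ((0 : ℝ), (1 : ℝ)) with hFdef
  have hC2' : ContDiffOn ℝ 2 f U := hC2
  have hfderiv : ContDiffOn ℝ 1 (fderiv ℝ f) U :=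
    hC2'.fderiv_of_isOpen hU (by norm_num)
  have hFc : ContDiffOn ℝ 1 F U :=
    (ContinuousLinearMap.apply ℝ ℝ ((0 : ℝ), (1 : ℝ))).contDiff.comp_contDiffOn hfderiv
  have hFd : ∀ p ∈ U, DifferentiableAt ℝ F p := fun p hp =>
    ((hFc.differentiableOn one_ne_zero).differentiableAt (hU.mem_nhds hp))
  -- partial derivative in second variable
  have lemA : ∀ a b : ℝ, a ≠ b → HasDerivAt (fun t => d a t) (F (a, b)) b := by
    intro a b hab
    have hca : ContDiffAt ℝ 2 f (a, b) := hC2'.contDiffAt (hU.mem_nhds hab)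
    have hda : DifferentiableAt ℝ f (a, b) := hca.differentiableAt (by norm_num)
    have hfa : HasFDerivAt f (fderiv ℝ f (a, b)) (a, b) := hda.hasFDerivAt
    have hc : HasDerivAt (fun t : ℝ => ((a : ℝ), t)) ((0 : ℝ), (1 : ℝ)) b :=
      (hasDerivAt_const b a).prodMk (hasDerivAt_id b)
    exact hfa.comp_hasDerivAt b hc
  have derivA : ∀ a b : ℝ, a ≠ b → deriv (fun t => d a t) b = F (a, b) :=
    fun a b h => (lemA a b h).deriv
  -- monotonicity of the second partial in the first variable
  have lemB : ∀ x y t : ℝ, x ≤ y → y < t → F (x, t) ≤ F (y, t) := by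
    intro x y t hxy hyt
    have hgd : DifferentiableOn ℝ (fun s => F (s, t)) (Iio t) := by
      intro s hs
      have hst : (s, t) ∈ U := ne_of_lt hs
      exact ((hFd _ hst).comp s
        (differentiableAt_fun_id.prodMk (differentiableAt_const t) :
          DifferentiableAt ℝ (fun s' : ℝ => (s', t)) s)).differentiableWithinAt
    have hderiv : ∀ s ∈ interior (Iio t), 0 ≤ deriv (fun s => F (s, t)) s := by
      rw [interior_Iio]
      intro s hs
      have hst : s ≠ t := ne_of_lt hs
      have heq : (fun s' => deriv (fun t' => d s' t') t) =ᶠ[nhds s] (fun s' => F (s', t)) := by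
        filter_upwards [isOpen_ne.mem_nhds hst] with s' hs' using derivA s' t hs'
      have h0 := h3 s t hst
      rwa [heq.deriv_eq] at h0
    have hmono : MonotoneOn (fun s => F (s, t)) (Iio t) := by
      apply monotoneOn_of_deriv_nonneg (convex_Iio t) hgd.continuousOn
      · rw [interior_Iio]; exact hgd
      · exact hderiv
    exact hmono (mem_Iio.mpr (lt_of_le_of_lt hxy hyt)) (mem_Iio.mpr hyt) hxy
  -- main middle case
  have lemC : ∀ x y z : ℝ, x < y → y < z → d x z ≤ d x y + d y z := by
    intro x y z hxy hyz
    have hdiff : ∀ t ∈ Ioi y, HasDerivAt (fun u => d x u - d y u) (F (x, t) - F (y, t)) t := by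
      intro t ht
      exact (lemA x t (ne_of_lt (hxy.trans ht))).sub (lemA y t (ne_of_lt ht))
    have hh : AntitoneOn (fun t => d x t - d y t) (Ioi y) := by
      apply antitoneOn_of_deriv_nonpos (convex_Ioi y)
      · exact fun u hu => (hdiff u hu).continuousAt.continuousWithinAt
      · rw [interior_Ioi]
        exact fun u hu => (hdiff u hu).differentiableAt.differentiableWithinAt
      · rw [interior_Ioi]
        intro u hu
        rw [(hdiff u hu).deriv]
        have := lemB x y u hxy.le hu
        linarith
    have key : ∀ t ∈ Ioc y z, d x z ≤ d x t + d y z := by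
      intro t ht
      have hz : z ∈ Ioi y := hyz
      have ht' : t ∈ Ioi y := ht.1
      have h5 : d x z - d y z ≤ d x t - d y t := hh ht' hz ht.2
      have h6 := hnonneg y t
      linarith
    have hev : ∀ᶠ t in nhdsWithin y (Ioi y), d x z ≤ d x t + d y z := by
      filter_upwards [Ioc_mem_nhdsGT_of_mem (mem_Ico.mpr ⟨le_refl y, hyz⟩)] with t ht
      exact key t ht
    have hcont : Tendsto (fun t => d x t + d y z) (nhdsWithin y (Ioi y))
        (nhds (d x y + d y z)) := by
      have hca : ContinuousAt (fun t => d x t) y :=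
        (lemA x y (ne_of_lt hxy)).differentiableAt.continuousAt
      exact (hca.tendsto.mono_left nhdsWithin_le_nhds).add tendsto_const_nhds
    exact ge_of_tendsto hcont hev
  -- triangle inequality for x < z
  have key2 : ∀ x y z : ℝ, x < z → d x z ≤ d x y + d y z := by
    intro x y z hxz
    rcases lt_trichotomy y x with h | h | h
    · have ha := (h4A z).1 (mem_Iio.mpr (h.trans hxz)) (mem_Iio.mpr hxz) h.le
      have h0 := hnonneg x y
      simp only at ha
      linarith
    · subst h
      have h0 := h1' y
      linarith
    · rcases lt_trichotomy y z with h' | h' | h'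
      · exact lemC x y z h h'
      · subst h'
        have h0 := h1' y
        linarith [hnonneg x y]
      · have hm := (h4A x).2 (mem_Ioi.mpr hxz) (mem_Ioi.mpr (hxz.trans h')) h'.le
        simp only at hm
        have e1 := h2 x z
        have e2 := h2 x y
        have h0 := hnonneg y z
        linarith
  refine ⟨hnonneg, ?_, h2, ?_⟩
  · intro x y
    constructor
    · intro h
      by_contra hne
      exact absurd h (ne_of_gt (h1 x y hne))
    · intro h
      subst h
      exact h1' x
  · intro x y z
    rcases lt_trichotomy x z with h | h | h
    · exact key2 x y z h
    · subst h
      have := hnonneg x y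
      have := hnonneg y x
      rw [h1' x]
      linarith [hnonneg y x, h2 x y]
    · have hk := key2 z y x h
      linarith [h2 x z, h2 x y, h2 y z]
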